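/- (Non-relativistic limit of the Ruijsenaars–Schneider Lax matrix.) Fix ν ∈ ℂ, ν ≠ 0, and for ε ≠ 0 set η = εν and c = 1/ε in the Ruijsenaars–Schneider Lax matrix L(z) (so that b_j = e^{ε p_j}·∏_{k≠j} ϑ(q_j−q_k−εν)/ϑ(q_j−q_k) and L_{ij}(z) = φ(z, q_i−q_j+εν)·b_j). Then for all i, j, lim_{ε→0} ( ν·L_{ij}(z) − δ_{ij}/ε ) = L^CM_{ij}(z), where L^CM_{ij}(z) = δ_{ij}·(p̃_i + ν·E₁(z)) + (1−δ_{ij})·ν·φ(z, q_i−q_j) is the elliptic Calogero–Moser Lax matrix with shifted momenta p̃_i = p_i − ν·∑_{k≠i} E₁(q_i−q_k). -/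

import Mathlib

open Complex Matrix Kronecker Finset Filter Topology

set_option maxHeartbeats 1000000

noncomputable section

/-- The lattice Λ = ℤ + τℤ. -/
def Lam (τ : ℂ) : Set ℂ := {z : ℂ | ∃ m n : ℤ, z = (m : ℂ) + (n : ℂ) * τ}

/-- The first Jacobi theta function
ϑ(z) = −∑_{j∈ℤ} exp(πi(j+1/2)²τ + 2πi(j+1/2)(z+1/2)). -/
def theta (τ : ℂ) (z : ℂ) : ℂ :=
  -∑' j : ℤ, Complex.exp ((Real.pi : ℂ) * Complex.I * ((j : ℂ) + 1 / 2) ^ 2 * τ +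
      2 * (Real.pi : ℂ) * Complex.I * ((j : ℂ) + 1 / 2) * (z + 1 / 2))

/-- The first Eisenstein function E₁(u) = ϑ′(u)/ϑ(u). -/
def E1 (τ : ℂ) (u : ℂ) : ℂ := deriv (theta τ) u / theta τ u

/-- The Kronecker function φ(z,u) = ϑ′(0)·ϑ(z+u)/(ϑ(z)·ϑ(u)). -/
def phi (τ : ℂ) (z u : ℂ) : ℂ :=
  deriv (theta τ) 0 * theta τ (z + u) / (theta τ z * theta τ u)

/-- The second Eisenstein function E₂(u) = −E₁′(u). -/
def E2 (τ : ℂ) (u : ℂ) : ℂ := -deriv (E1 τ) u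

/-- The Weierstrass ℘-function: ℘(u) = E₂(u) + (1/3)·ϑ‴(0)/ϑ′(0). -/
def wp (τ : ℂ) (u : ℂ) : ℂ :=
  E2 τ u + (1 / 3) * iteratedDeriv 3 (theta τ) 0 / deriv (theta τ) 0

namespace RS

local notation "π'" => (Real.pi : ℂ)

lemma exp_eq_neg (x y : ℂ) (k : ℤ) (h : x = y + (2 * (k : ℂ) + 1) * π' * I) :
    cexp x = -cexp y := by
  rw [h, Complex.exp_add,
    show ((2 * (k : ℂ) + 1) * π' * I) = (k : ℂ) * (2 * π' * I) + π' * I by ring,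
    Complex.exp_add, Complex.exp_int_mul_two_pi_mul_I, Complex.exp_pi_mul_I]
  ring

lemma aux1 (x y d c J : ℂ) (k : ℤ) (h : x + y = d + c + (2 * (k : ℂ) + 1) * π' * I) :
    -(cexp x * (cexp y * J)) = -cexp d * -(cexp c * J) := by
  have h2 : cexp x * cexp y = -(cexp d * cexp c) := by
    rw [← Complex.exp_add, ← Complex.exp_add]
    exact exp_eq_neg _ _ k h
  calc -(cexp x * (cexp y * J)) = -(cexp x * cexp y * J) := by ring
  _ = -(-(cexp d * cexp c) * J) := by rw [h2]
  _ = _ := by ring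

lemma aux2 (x y c J : ℂ) (k : ℤ) (h : x + y = c + (2 * (k : ℂ) + 1) * π' * I) :
    -(cexp x * (cexp y * J)) = - -(cexp c * J) := by
  have h2 : cexp x * cexp y = -cexp c := by
    rw [← Complex.exp_add]
    exact exp_eq_neg _ _ k h
  calc -(cexp x * (cexp y * J)) = -(cexp x * cexp y * J) := by ring
  _ = -(-cexp c * J) := by rw [h2]
  _ = _ := by ring

lemma theta_eq (τ z : ℂ) : theta τ z =
    -(cexp (π' * I * τ / 4 + π' * I * z + π' * I / 2) *
      jacobiTheta₂ (z + 1 / 2 + τ / 2) τ) := by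
  rw [theta, jacobiTheta₂, ← tsum_mul_left, neg_inj]
  refine tsum_congr fun n => ?_
  rw [jacobiTheta₂_term, ← Complex.exp_add]
  congr 1
  push_cast
  ring

lemma theta_differentiable {τ : ℂ} (hτ : 0 < τ.im) : Differentiable ℂ (theta τ) := by
  have h : theta τ = fun z => -(cexp (π' * I * τ / 4 + π' * I * z + π' * I / 2) *
      jacobiTheta₂ (z + 1 / 2 + τ / 2) τ) := funext fun z => theta_eq τ z
  rw [h]
  refine Differentiable.neg (Differentiable.mul ?_ ?_)
  · exact Complex.differentiable_exp.comp (by fun_prop)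
  · intro z
    exact ((differentiableAt_jacobiTheta₂_fst (z + 1 / 2 + τ / 2) hτ).comp z (f := fun w : ℂ => w + 1 / 2 + τ / 2) (by fun_prop))

lemma theta_add_one (τ z : ℂ) : theta τ (z + 1) = -theta τ z := by
  rw [theta_eq, theta_eq]
  have h1 : z + 1 + 1 / 2 + τ / 2 = (z + 1 / 2 + τ / 2) + 1 := by ring
  rw [h1, jacobiTheta₂_add_left]
  have h2 : π' * I * τ / 4 + π' * I * (z + 1) + π' * I / 2
      = (π' * I * τ / 4 + π' * I * z + π' * I / 2) + π' * I := by ring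
  rw [h2, Complex.exp_add, Complex.exp_pi_mul_I]
  ring

lemma theta_add_tau {τ : ℂ} (z : ℂ) :
    theta τ (z + τ) = -cexp (-(π' * I * τ) - 2 * π' * I * z) * theta τ z := by
  rw [theta_eq, theta_eq]
  have h1 : z + τ + 1 / 2 + τ / 2 = (z + 1 / 2 + τ / 2) + τ := by ring
  rw [h1, jacobiTheta₂_add_left']
  rw [mul_assoc]
  exact aux1 _ _ _ _ _ (-1) (by push_cast; ring)

lemma theta_neg (τ z : ℂ) : theta τ (-z) = -theta τ z := by
  rw [theta_eq, theta_eq]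
  have h1 : -z + 1 / 2 + τ / 2 = ((-(z + 1 / 2 + τ / 2) + τ) + 1) := by ring
  rw [h1, jacobiTheta₂_add_left, jacobiTheta₂_add_left', jacobiTheta₂_neg_left]
  exact aux2 _ _ _ _ 0 (by push_cast; ring)

lemma theta_zero (τ : ℂ) : theta τ 0 = 0 := by
  have := theta_neg τ 0
  rw [neg_zero] at this
  have h2 : (2 : ℂ) * theta τ 0 = 0 := by linear_combination this
  simpa using h2

variable {τ : ℂ}

lemma Lam.add {z w : ℂ} (hz : z ∈ Lam τ) (hw : w ∈ Lam τ) : z + w ∈ Lam τ := by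
  obtain ⟨m, n, rfl⟩ := hz; obtain ⟨m', n', rfl⟩ := hw
  exact ⟨m + m', n + n', by push_cast; ring⟩

lemma Lam.neg {z : ℂ} (hz : z ∈ Lam τ) : -z ∈ Lam τ := by
  obtain ⟨m, n, rfl⟩ := hz; exact ⟨-m, -n, by push_cast; ring⟩

lemma Lam.zero : (0 : ℂ) ∈ Lam τ := ⟨0, 0, by simp⟩

lemma Lam.one : (1 : ℂ) ∈ Lam τ := ⟨1, 0, by simp⟩

lemma Lam.tau : τ ∈ Lam τ := ⟨0, 1, by simp⟩

lemma Lam.sub {z w : ℂ} (hz : z ∈ Lam τ) (hw : w ∈ Lam τ) : z - w ∈ Lam τ := by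
  rw [sub_eq_add_neg]; exact Lam.add hz (Lam.neg hw)

lemma Lam.int_add (m n : ℤ) : ((m : ℂ) + (n : ℂ) * τ) ∈ Lam τ := ⟨m, n, rfl⟩

/-- minimal norm of nonzero lattice vectors -/
lemma Lam.norm_lb (hτ : 0 < τ.im) {w : ℂ} (hw : w ∈ Lam τ) (h0 : w ≠ 0) :
    min 1 τ.im ≤ ‖w‖ := by
  obtain ⟨m, n, rfl⟩ := hw
  rcases eq_or_ne n 0 with rfl | hn
  · simp only [Int.cast_zero, zero_mul, add_zero] at h0 ⊢
    have hm : m ≠ 0 := by exact_mod_cast h0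
    calc min 1 τ.im ≤ 1 := min_le_left _ _
    _ ≤ |(m : ℝ)| := by exact_mod_cast Int.one_le_abs hm
    _ = ‖(m : ℂ)‖ := by rw [Complex.norm_intCast]
  · have him : ((m : ℂ) + (n : ℂ) * τ).im = n * τ.im := by simp
    calc min 1 τ.im ≤ τ.im := min_le_right _ _
    _ ≤ |(n : ℝ)| * τ.im := by
        nlinarith [Int.one_le_abs hn, (by exact_mod_cast (abs_nonneg (n:ℝ)) : (0:ℝ) ≤ |(n:ℝ)|),
          (by exact_mod_cast Int.one_le_abs hn : (1:ℝ) ≤ |(n:ℝ)|)]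
    _ = |((m : ℂ) + (n : ℂ) * τ).im| := by rw [him, abs_mul, abs_of_pos hτ]
    _ ≤ ‖(m : ℂ) + (n : ℂ) * τ‖ := Complex.abs_im_le_norm _

/-- points near a lattice point, distinct from it, are not in the lattice -/
lemma Lam.off_near (hτ : 0 < τ.im) {w u : ℂ} (hw : w ∈ Lam τ) (hu : u ≠ 0)
    (hsmall : ‖u‖ < min 1 τ.im) : w + u ∉ Lam τ := by
  intro hmem
  have : u ∈ Lam τ := by simpa using Lam.sub hmem hw
  exact absurd (Lam.norm_lb hτ this hu) (not_le.mpr hsmall)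

/-- separation of a non-lattice point from the lattice -/
lemma Lam.sep (hτ : 0 < τ.im) {z : ℂ} (hz : z ∉ Lam τ) :
    ∃ δ > 0, ∀ w ∈ Lam τ, δ ≤ dist z w := by
  set δ₀ := min 1 τ.im with hδ₀
  have hδ₀pos : 0 < δ₀ := lt_min one_pos hτ
  by_cases h : ∃ w ∈ Lam τ, dist z w < δ₀ / 2
  · obtain ⟨w₀, hw₀, hw₀d⟩ := h
    have hzw : z ≠ w₀ := fun h => hz (h ▸ hw₀)
    refine ⟨min (δ₀ / 2) (dist z w₀), lt_min (by linarith) (dist_pos.mpr hzw), fun w hw => ?_⟩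
    rcases eq_or_ne w w₀ with rfl | hne
    · exact min_le_right _ _
    · have hdw : δ₀ ≤ dist w w₀ := by
        have := Lam.norm_lb hτ (Lam.sub hw hw₀) (sub_ne_zero.mpr hne)
        rwa [dist_eq_norm]
      have : δ₀ / 2 ≤ dist z w := by
        have htri := dist_triangle w w₀ z
        have h1 : dist w z ≤ dist z w := by rw [dist_comm]
        have h2 : dist w₀ z = dist z w₀ := dist_comm _ _
        nlinarith [dist_triangle w z w₀, dist_comm z w, dist_comm z w₀]
      exact le_trans (min_le_left _ _) this
  · push_neg at h
    exact ⟨δ₀ / 2, by linarith, fun w hw => h w hw⟩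

/-- fundamental domain reduction -/
lemma Lam.reduce (hτ : 0 < τ.im) (z : ℂ) :
    ∃ m n : ℤ, ‖z - ((m : ℂ) + (n : ℂ) * τ)‖ ≤ 1 + ‖τ‖ := by
  set y := z.im / τ.im with hy
  set x := z.re - y * τ.re with hx
  have hz : z = (x : ℂ) + (y : ℂ) * τ := by
    apply Complex.ext
    · simp [hx]
    · simp [hy]; field_simp
  refine ⟨⌊x⌋, ⌊y⌋, ?_⟩
  have : z - ((⌊x⌋ : ℂ) + (⌊y⌋ : ℂ) * τ) = ((x - ⌊x⌋ : ℝ) : ℂ) + ((y - ⌊y⌋ : ℝ) : ℂ) * τ := by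
    rw [hz]; push_cast; ring
  rw [this]
  have h1 : ‖((x - ⌊x⌋ : ℝ) : ℂ)‖ ≤ 1 := by
    rw [Complex.norm_real, Real.norm_eq_abs, _root_.abs_of_nonneg (sub_nonneg.mpr (Int.floor_le x))]
    linarith [Int.lt_floor_add_one x]
  have h2 : ‖((y - ⌊y⌋ : ℝ) : ℂ) * τ‖ ≤ ‖τ‖ := by
    rw [norm_mul, Complex.norm_real, Real.norm_eq_abs,
      _root_.abs_of_nonneg (sub_nonneg.mpr (Int.floor_le y))]
    have := Int.lt_floor_add_one y
    nlinarith [norm_nonneg τ]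
  calc ‖_ + _‖ ≤ _ := norm_add_le _ _
  _ ≤ 1 + ‖τ‖ := add_le_add h1 h2

/-- factor of the first product -/
def afac (τ : ℂ) (n : ℕ) (z : ℂ) : ℂ := 1 - cexp (2 * π' * I * (((n : ℂ) + 1) * τ + z))

/-- factor of the second product -/
def bfac (τ : ℂ) (n : ℕ) (z : ℂ) : ℂ := 1 - cexp (2 * π' * I * (((n : ℂ) + 1) * τ - z))

def Afun (τ z : ℂ) : ℂ := ∏' n : ℕ, afac τ n z

def Bfun (τ z : ℂ) : ℂ := ∏' n : ℕ, bfac τ n z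

def Pfun (τ z : ℂ) : ℂ := Complex.sin (π' * z) * (Afun τ z * Bfun τ z)

lemma norm_exp2pi (w : ℂ) : ‖cexp (2 * π' * I * w)‖ = Real.exp (-(2 * Real.pi * w.im)) := by
  rw [Complex.norm_exp]
  congr 1
  simp [Complex.mul_re, Complex.mul_im]

variable {τ : ℂ}

lemma afac_eq_zero_iff {n : ℕ} {z : ℂ} :
    afac τ n z = 0 ↔ ∃ k : ℤ, ((n : ℂ) + 1) * τ + z = (k : ℂ) := by
  rw [afac, sub_eq_zero, eq_comm, Complex.exp_eq_one_iff]
  constructor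
  · rintro ⟨k, hk⟩
    refine ⟨k, ?_⟩
    have h2 : (2 : ℂ) * π' * I ≠ 0 :=
      mul_ne_zero (mul_ne_zero two_ne_zero (Complex.ofReal_ne_zero.mpr Real.pi_ne_zero))
        Complex.I_ne_zero
    have hk' : (2 * π' * I) * (((n : ℂ) + 1) * τ + z) = (2 * π' * I) * k := by
      linear_combination hk
    exact mul_left_cancel₀ h2 hk'
  · rintro ⟨k, hk⟩
    exact ⟨k, by rw [hk]; ring⟩

lemma bfac_eq_zero_iff {n : ℕ} {z : ℂ} :
    bfac τ n z = 0 ↔ ∃ k : ℤ, ((n : ℂ) + 1) * τ - z = (k : ℂ) := by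
  rw [bfac, sub_eq_zero, eq_comm, Complex.exp_eq_one_iff]
  constructor
  · rintro ⟨k, hk⟩
    refine ⟨k, ?_⟩
    have h2 : (2 : ℂ) * π' * I ≠ 0 :=
      mul_ne_zero (mul_ne_zero two_ne_zero (Complex.ofReal_ne_zero.mpr Real.pi_ne_zero))
        Complex.I_ne_zero
    have hk' : (2 * π' * I) * (((n : ℂ) + 1) * τ - z) = (2 * π' * I) * k := by
      linear_combination hk
    exact mul_left_cancel₀ h2 hk'
  · rintro ⟨k, hk⟩
    exact ⟨k, by rw [hk]; ring⟩

lemma afac_ne_zero {n : ℕ} {z : ℂ} (hz : z ∉ Lam τ) : afac τ n z ≠ 0 := by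
  rw [Ne, afac_eq_zero_iff]
  rintro ⟨k, hk⟩
  exact hz ⟨k, -(n + 1), by push_cast; linear_combination hk⟩

lemma bfac_ne_zero {n : ℕ} {z : ℂ} (hz : z ∉ Lam τ) : bfac τ n z ≠ 0 := by
  rw [Ne, bfac_eq_zero_iff]
  rintro ⟨k, hk⟩
  exact hz ⟨-k, (n + 1), by push_cast; linear_combination -hk⟩

lemma afac_ne_zero_at_zero (hτ : 0 < τ.im) {n : ℕ} : afac τ n 0 ≠ 0 := by
  rw [Ne, afac_eq_zero_iff]
  rintro ⟨k, hk⟩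
  have := congrArg Complex.im hk
  simp at this
  rcases this with h | h
  · nlinarith [Nat.cast_nonneg (α := ℝ) n]
  · linarith

lemma bfac_ne_zero_at_zero (hτ : 0 < τ.im) {n : ℕ} : bfac τ n 0 ≠ 0 := by
  rw [Ne, bfac_eq_zero_iff]
  rintro ⟨k, hk⟩
  have := congrArg Complex.im hk
  simp at this
  rcases this with h | h
  · nlinarith [Nat.cast_nonneg (α := ℝ) n]
  · linarith

/-- the strip of half-width (m+1)·im τ -/
def strip (τ : ℂ) (m : ℕ) : Set ℂ := {z : ℂ | |z.im| < ((m : ℝ) + 1) * τ.im}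

lemma strip_isOpen (τ : ℂ) (m : ℕ) : IsOpen (strip τ m) :=
  isOpen_lt (by fun_prop) continuous_const

lemma mem_strip_zero (hτ : 0 < τ.im) : (0 : ℂ) ∈ strip τ 0 := by
  simp [strip, hτ]

lemma exists_strip (hτ : 0 < τ.im) (z : ℂ) : ∃ m : ℕ, z ∈ strip τ m := by
  obtain ⟨m, hm⟩ := exists_nat_gt (|z.im| / τ.im)
  refine ⟨m, ?_⟩
  have : |z.im| < m * τ.im := by
    rw [div_lt_iff₀ hτ] at hm; linarith
  simp only [strip, Set.mem_setOf_eq]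
  nlinarith [hτ]

/-- choice of tail cutoff for a given strip -/
lemma exists_cutoff (hτ : 0 < τ.im) :
    ∃ M : ℕ, Real.exp (-(2 * Real.pi * ((M : ℝ) * τ.im))) ≤ 1 / 2 := by
  have hr : Real.exp (-(2 * Real.pi * τ.im)) < 1 := by
    apply Real.exp_lt_one_iff.mpr
    nlinarith [Real.pi_pos, hτ]
  obtain ⟨M, hM⟩ := exists_pow_lt_of_lt_one (by norm_num : (0:ℝ) < 1/2) hr
  refine ⟨M, ?_⟩
  rw [show -(2 * Real.pi * ((M : ℝ) * τ.im)) = (M : ℝ) * (-(2 * Real.pi * τ.im)) by ring,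
    Real.exp_nat_mul]
  exact hM.le

/-- summable tail bound -/
def ubnd (τ : ℂ) (M : ℕ) (j : ℕ) : ℝ := Real.exp (-(2 * Real.pi * (((M : ℝ) + j) * τ.im)))

lemma ubnd_summable (hτ : 0 < τ.im) (M : ℕ) : Summable (ubnd τ M) := by
  have : ubnd τ M = fun j => Real.exp (-(2 * Real.pi * ((M : ℝ) * τ.im))) *
      (Real.exp (-(2 * Real.pi * τ.im)))^j := by
    funext j
    rw [ubnd, ← Real.exp_nat_mul, ← Real.exp_add]
    congr 1
    ring
  rw [this]
  apply Summable.mul_left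
  apply summable_geometric_of_lt_one (Real.exp_pos _).le
  apply Real.exp_lt_one_iff.mpr
  nlinarith [Real.pi_pos, hτ]

lemma ubnd_le_half {M : ℕ} (hM : Real.exp (-(2 * Real.pi * ((M : ℝ) * τ.im))) ≤ 1 / 2)
    (hτ : 0 < τ.im) (j : ℕ) : ubnd τ M j ≤ 1 / 2 := by
  refine le_trans ?_ hM
  apply Real.exp_le_exp.mpr
  have h0 : 0 ≤ 2 * Real.pi * ((j : ℝ) * τ.im) := by positivity
  nlinarith [h0]

lemma tail_le (hτ : 0 < τ.im) {m M j : ℕ} {z : ℂ} (hz : z ∈ strip τ m) :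
    ‖cexp (2 * π' * I * ((((j + (m + M) : ℕ) : ℂ) + 1) * τ + z))‖ ≤ ubnd τ M j := by
  rw [norm_exp2pi, ubnd]
  apply Real.exp_le_exp.mpr
  have him : ((((j + (m + M) : ℕ) : ℂ) + 1) * τ + z).im = ((j + (m + M) : ℝ) + 1) * τ.im + z.im := by
    simp
  rw [him]
  have hz' : |z.im| < ((m : ℝ) + 1) * τ.im := hz
  have h1 : -(((m : ℝ) + 1) * τ.im) < z.im := by
    rcases abs_lt.mp hz' with ⟨h, _⟩; linarith
  nlinarith [Real.pi_pos]

lemma afac_tail_sub_one (n : ℕ) (z : ℂ) :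
    afac τ n z - 1 = -cexp (2 * π' * I * (((n : ℂ) + 1) * τ + z)) := by
  rw [afac]; ring

lemma log_afac_bound (hτ : 0 < τ.im) {m M j : ℕ} {z : ℂ} (hz : z ∈ strip τ m)
    (hM : Real.exp (-(2 * Real.pi * ((M : ℝ) * τ.im))) ≤ 1 / 2) :
    ‖Complex.log (afac τ (j + (m + M)) z)‖ ≤ (3 / 2) * ubnd τ M j := by
  set w := cexp (2 * π' * I * ((((j + (m + M) : ℕ) : ℂ) + 1) * τ + z)) with hw
  have hb : ‖w‖ ≤ ubnd τ M j := tail_le hτ hz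
  have hb2 : ‖w‖ ≤ 1 / 2 := hb.trans (ubnd_le_half hM hτ j)
  have key := Complex.norm_log_one_add_half_le_self (z := -w) (by rwa [norm_neg])
  have h3 : (1 : ℂ) + -w = afac τ (j + (m + M)) z := by rw [afac, hw, sub_eq_add_neg]
  rw [h3, norm_neg] at key
  nlinarith [norm_nonneg w]

lemma afac_tail_ne_zero (hτ : 0 < τ.im) {m M j : ℕ} {z : ℂ} (hz : z ∈ strip τ m)
    (hM : Real.exp (-(2 * Real.pi * ((M : ℝ) * τ.im))) ≤ 1 / 2) :
    afac τ (j + (m + M)) z ≠ 0 := by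
  set w := cexp (2 * π' * I * ((((j + (m + M) : ℕ) : ℂ) + 1) * τ + z)) with hw
  have hb2 : ‖w‖ ≤ 1 / 2 := (tail_le hτ hz).trans (ubnd_le_half hM hτ j)
  intro h0
  rw [afac, sub_eq_zero] at h0
  rw [hw, ← h0] at hb2
  norm_num at hb2

/-- the tail log-sum -/
def LA (τ : ℂ) (k : ℕ) (z : ℂ) : ℂ := ∑' j : ℕ, Complex.log (afac τ (j + k) z)

lemma summable_log_afac (hτ : 0 < τ.im) {m M : ℕ} {z : ℂ} (hz : z ∈ strip τ m)
    (hM : Real.exp (-(2 * Real.pi * ((M : ℝ) * τ.im))) ≤ 1 / 2) :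
    Summable (fun j : ℕ => Complex.log (afac τ (j + (m + M)) z)) := by
  exact Summable.of_norm_bounded (
    (ubnd_summable hτ M).mul_left (3 / 2)) (fun j => log_afac_bound hτ hz hM)

lemma hasProd_afac_tail (hτ : 0 < τ.im) {m M : ℕ} {z : ℂ} (hz : z ∈ strip τ m)
    (hM : Real.exp (-(2 * Real.pi * ((M : ℝ) * τ.im))) ≤ 1 / 2) :
    HasProd (fun j : ℕ => afac τ (j + (m + M)) z) (cexp (LA τ (m + M) z)) := by
  have h1 := (summable_log_afac hτ hz hM).hasSum.cexp
  have h2 : cexp ∘ (fun j : ℕ => Complex.log (afac τ (j + (m + M)) z)) =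
      fun j : ℕ => afac τ (j + (m + M)) z := by
    funext j
    simp only [Function.comp_apply]
    exact Complex.exp_log (afac_tail_ne_zero hτ hz hM)
  rwa [h2] at h1

lemma multipliable_afac (hτ : 0 < τ.im) (z : ℂ) : Multipliable (fun n => afac τ n z) := by
  obtain ⟨m, hm⟩ := exists_strip hτ z
  obtain ⟨M, hM⟩ := exists_cutoff hτ
  exact Multipliable.comp_nat_add ⟨_, hasProd_afac_tail hτ hm hM⟩

lemma Afun_eq_on_strip (hτ : 0 < τ.im) {m M : ℕ} {z : ℂ} (hz : z ∈ strip τ m)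
    (hM : Real.exp (-(2 * Real.pi * ((M : ℝ) * τ.im))) ≤ 1 / 2) :
    Afun τ z = (∏ n ∈ range (m + M), afac τ n z) * cexp (LA τ (m + M) z) := by
  rw [Afun]
  exact ((hasProd_afac_tail hτ hz hM).prod_range_mul).tprod_eq

lemma LA_diffOn (hτ : 0 < τ.im) {m M : ℕ}
    (hM : Real.exp (-(2 * Real.pi * ((M : ℝ) * τ.im))) ≤ 1 / 2) :
    DifferentiableOn ℂ (LA τ (m + M)) (strip τ m) := by
  apply differentiableOn_tsum_of_summable_norm ((ubnd_summable hτ M).mul_left (3 / 2))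
    ?_ (strip_isOpen τ m) (fun j w hw => log_afac_bound hτ hw hM)
  intro j
  apply DifferentiableOn.clog
  · apply DifferentiableOn.const_sub
    apply Differentiable.differentiableOn
    apply Complex.differentiable_exp.comp
    fun_prop
  · intro x hx
    have hb := (tail_le hτ (j := j) (M := M) hx).trans (ubnd_le_half hM hτ j)
    rw [Complex.mem_slitPlane_iff]
    left
    have := Complex.abs_re_le_norm (cexp (2 * π' * I * ((((j + (m + M) : ℕ) : ℂ) + 1) * τ + x)))
    have h2 : |(cexp (2 * π' * I * ((((j + (m + M) : ℕ) : ℂ) + 1) * τ + x))).re| ≤ 1 / 2 := by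
      linarith
    simp only [afac, Complex.sub_re, Complex.one_re]
    rcases abs_le.mp h2 with ⟨h3, h4⟩
    linarith

lemma Afun_diffOn (hτ : 0 < τ.im) (m : ℕ) : DifferentiableOn ℂ (Afun τ) (strip τ m) := by
  obtain ⟨M, hM⟩ := exists_cutoff hτ
  have d : DifferentiableOn ℂ
      (fun z => (∏ n ∈ range (m + M), afac τ n z) * cexp (LA τ (m + M) z)) (strip τ m) := by
    apply DifferentiableOn.mul
    · apply DifferentiableOn.fun_finsetProd
      intro n _
      apply Differentiable.differentiableOn
      apply Differentiable.const_sub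
      apply Complex.differentiable_exp.comp; fun_prop
    · exact (LA_diffOn hτ hM).cexp
  exact d.congr (fun z hz => Afun_eq_on_strip hτ hz hM)

lemma Afun_differentiable (hτ : 0 < τ.im) : Differentiable ℂ (Afun τ) := by
  intro z
  obtain ⟨m, hm⟩ := exists_strip hτ z
  exact (Afun_diffOn hτ m).differentiableAt ((strip_isOpen τ m).mem_nhds hm)

lemma Afun_ne_zero (hτ : 0 < τ.im) {z : ℂ} (h : ∀ n, afac τ n z ≠ 0) : Afun τ z ≠ 0 := by
  obtain ⟨m, hm⟩ := exists_strip hτ z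
  obtain ⟨M, hM⟩ := exists_cutoff hτ
  rw [Afun_eq_on_strip hτ hm hM]
  exact mul_ne_zero (prod_ne_zero_iff.mpr fun n _ => h n) (Complex.exp_ne_zero _)

lemma bfac_eq_afac_neg (n : ℕ) (z : ℂ) : bfac τ n z = afac τ n (-z) := by
  rw [bfac, afac]
  ring_nf

lemma Bfun_eq_Afun_neg (z : ℂ) : Bfun τ z = Afun τ (-z) := by
  rw [Bfun, Afun]
  exact tprod_congr fun n => bfac_eq_afac_neg n z

lemma Bfun_differentiable (hτ : 0 < τ.im) : Differentiable ℂ (Bfun τ) := by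
  have : Bfun τ = fun z => Afun τ (-z) := funext fun z => Bfun_eq_Afun_neg z
  rw [this]
  exact (Afun_differentiable hτ).comp (differentiable_neg)

lemma Pfun_differentiable (hτ : 0 < τ.im) : Differentiable ℂ (Pfun τ) := by
  apply Differentiable.mul
  · exact Complex.differentiable_sin.comp (by fun_prop)
  · exact (Afun_differentiable hτ).mul (Bfun_differentiable hτ)

lemma Pfun_ne_zero (hτ : 0 < τ.im) {z : ℂ} (hz : z ∉ Lam τ) : Pfun τ z ≠ 0 := by
  apply mul_ne_zero
  · intro h0
    obtain ⟨k, hk⟩ := Complex.sin_eq_zero_iff.mp h0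
    have hπ : π' ≠ 0 := Complex.ofReal_ne_zero.mpr Real.pi_ne_zero
    have : z = (k : ℂ) := by
      have hk' : π' * z = π' * k := by linear_combination hk
      exact mul_left_cancel₀ hπ hk'
    exact hz ⟨k, 0, by rw [this]; push_cast; ring⟩
  · apply mul_ne_zero
    · exact Afun_ne_zero hτ fun n => afac_ne_zero hz
    · rw [Bfun_eq_Afun_neg]
      apply Afun_ne_zero hτ
      intro n
      rw [← bfac_eq_afac_neg]
      exact bfac_ne_zero hz

lemma Pfun_zero : Pfun τ 0 = 0 := by
  rw [Pfun]
  simp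

lemma hasDerivAt_Pfun_zero (hτ : 0 < τ.im) :
    HasDerivAt (Pfun τ) (π' * (Afun τ 0 * Bfun τ 0)) 0 := by
  have h1 : HasDerivAt (fun z : ℂ => Complex.sin (π' * z)) π' 0 := by
    have := (Complex.hasDerivAt_sin (π' * 0)).comp 0
      ((hasDerivAt_id (0:ℂ)).const_mul π')
    simp at this; exact this
  have h2 : HasDerivAt (fun z => Afun τ z * Bfun τ z)
      (deriv (fun z => Afun τ z * Bfun τ z) 0) 0 :=
    (((Afun_differentiable hτ).mul (Bfun_differentiable hτ)) 0).hasDerivAt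
  have := h1.mul h2
  simp at this; exact this

lemma deriv_Pfun_zero_ne (hτ : 0 < τ.im) : deriv (Pfun τ) 0 ≠ 0 := by
  rw [(hasDerivAt_Pfun_zero hτ).deriv]
  apply mul_ne_zero
  · exact Complex.ofReal_ne_zero.mpr Real.pi_ne_zero
  apply mul_ne_zero
  · exact Afun_ne_zero hτ fun n => afac_ne_zero_at_zero hτ
  · rw [Bfun_eq_Afun_neg, neg_zero]
    exact Afun_ne_zero hτ fun n => afac_ne_zero_at_zero hτ

/-- the `z ↦ z+1` functional equation -/
lemma afac_add_one (n : ℕ) (z : ℂ) : afac τ n (z + 1) = afac τ n z := by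
  rw [afac, afac, show 2 * π' * I * (((n : ℂ) + 1) * τ + (z + 1)) =
    2 * π' * I * (((n : ℂ) + 1) * τ + z) + 2 * π' * I by ring, Complex.exp_add,
    Complex.exp_two_pi_mul_I, mul_one]

lemma Afun_add_one (w : ℂ) : Afun τ (w + 1) = Afun τ w := by
  rw [Afun, Afun]
  exact tprod_congr fun n => afac_add_one n w

lemma Pfun_add_one (z : ℂ) : Pfun τ (z + 1) = -Pfun τ z := by
  rw [Pfun, Pfun]
  have hA : Afun τ (z + 1) = Afun τ z := Afun_add_one z
  have hB : Bfun τ (z + 1) = Bfun τ z := by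
    have h := Afun_add_one (τ := τ) (-(z + 1))
    rw [show -(z + 1) + 1 = -z by ring] at h
    rw [Bfun_eq_Afun_neg, Bfun_eq_Afun_neg, ← h]
  rw [hA, hB, show π' * (z + 1) = π' * z + π' by ring, Complex.sin_add_pi]
  ring

/-- the `z ↦ z+τ` shift of the A-product -/
lemma afac_shift (n : ℕ) (z : ℂ) : afac τ n (z + τ) = afac τ (n + 1) z := by
  rw [afac, afac]
  congr 2
  push_cast
  ring

lemma Afun_shift (hτ : 0 < τ.im) (z : ℂ) : Afun τ z = afac τ 0 z * Afun τ (z + τ) := by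
  have hf : (fun n : ℕ => afac τ n (z + τ)) = fun n => afac τ (n + 1) z :=
    funext fun n => afac_shift n z
  rw [Afun, Afun, hf]
  exact tprod_eq_zero_mul' (by rw [← hf]; exact multipliable_afac hτ (z + τ))

lemma afac_zero (z : ℂ) : afac τ 0 z = 1 - cexp (2 * π' * I * (τ + z)) := by
  rw [afac]
  norm_num

lemma Bfun_shift (hτ : 0 < τ.im) (z : ℂ) :
    Bfun τ (z + τ) = (1 - cexp (-(2 * π' * I * z))) * Bfun τ z := by
  rw [Bfun_eq_Afun_neg, Bfun_eq_Afun_neg]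
  have h := Afun_shift hτ (-z - τ)
  rw [show -z - τ + τ = -z by ring] at h
  rw [show -(z + τ) = -z - τ by ring, h, afac_zero,
    show (2 * π' * I * (τ + (-z - τ))) = -(2 * π' * I * z) by ring]

lemma sin_shift (z : ℂ) : Complex.sin (π' * (z + τ)) * (1 - cexp (-(2 * π' * I * z))) =
    -cexp (-(π' * I * τ) - 2 * π' * I * z) * Complex.sin (π' * z) *
      (1 - cexp (2 * π' * I * (τ + z))) := by
  have hu : cexp (π' * I * z) ≠ 0 := Complex.exp_ne_zero _
  have hv : cexp (π' * I * τ) ≠ 0 := Complex.exp_ne_zero _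
  rw [Complex.sin, Complex.sin]
  have h1 : cexp (-(π' * (z + τ)) * I) = (cexp (π' * I * z) * cexp (π' * I * τ))⁻¹ := by
    rw [← Complex.exp_add, ← Complex.exp_neg]; congr 1; ring
  have h2 : cexp ((π' * (z + τ)) * I) = cexp (π' * I * z) * cexp (π' * I * τ) := by
    rw [← Complex.exp_add]; congr 1; ring
  have h3 : cexp (-(2 * π' * I * z)) = (cexp (π' * I * z) * cexp (π' * I * z))⁻¹ := by
    rw [← Complex.exp_add, ← Complex.exp_neg]; congr 1; ring
  have h4 : cexp (-(π' * I * τ) - 2 * π' * I * z) =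
      (cexp (π' * I * τ) * (cexp (π' * I * z) * cexp (π' * I * z)))⁻¹ := by
    rw [← Complex.exp_add, ← Complex.exp_add, ← Complex.exp_neg]; congr 1; ring
  have h5 : cexp (-(π' * z) * I) = (cexp (π' * I * z))⁻¹ := by
    rw [← Complex.exp_neg]; congr 1; ring
  have h6 : cexp ((π' * z) * I) = cexp (π' * I * z) := by congr 1; ring
  have h7 : cexp (2 * π' * I * (τ + z)) =
      cexp (π' * I * τ) * cexp (π' * I * τ) * (cexp (π' * I * z) * cexp (π' * I * z)) := by
    rw [← Complex.exp_add, ← Complex.exp_add, ← Complex.exp_add]; congr 1; ring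
  rw [h1, h2, h3, h4, h5, h6, h7]
  field_simp
  ring

lemma Pfun_shift (hτ : 0 < τ.im) {z : ℂ} (hz : z ∉ Lam τ) :
    Pfun τ (z + τ) = -cexp (-(π' * I * τ) - 2 * π' * I * z) * Pfun τ z := by
  have ha0 : afac τ 0 z ≠ 0 := afac_ne_zero hz
  apply mul_left_cancel₀ ha0
  calc afac τ 0 z * Pfun τ (z + τ)
      = Complex.sin (π' * (z + τ)) * ((afac τ 0 z * Afun τ (z + τ)) * Bfun τ (z + τ)) := by
        rw [Pfun]; ring
    _ = Complex.sin (π' * (z + τ)) *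
        (Afun τ z * ((1 - cexp (-(2 * π' * I * z))) * Bfun τ z)) := by
        rw [← Afun_shift hτ z, Bfun_shift hτ z]
    _ = (Complex.sin (π' * (z + τ)) * (1 - cexp (-(2 * π' * I * z)))) *
        (Afun τ z * Bfun τ z) := by ring
    _ = (-cexp (-(π' * I * τ) - 2 * π' * I * z) * Complex.sin (π' * z) *
        (1 - cexp (2 * π' * I * (τ + z)))) * (Afun τ z * Bfun τ z) := by rw [sin_shift]
    _ = afac τ 0 z * (-cexp (-(π' * I * τ) - 2 * π' * I * z) * Pfun τ z) := by
        rw [afac_zero, Pfun]; ring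

section QP

lemma qp_int (f : ℂ → ℂ) (s : Set ℂ)
    (hsm : ∀ z ∈ s, ∀ m n : ℤ, z + ((m : ℂ) + (n : ℂ) * τ) ∈ s)
    (h1 : ∀ z ∈ s, f (z + 1) = -f z) (m : ℤ) :
    ∀ z ∈ s, f (z + (m : ℂ)) = (-1) ^ m * f z := by
  induction m using Int.induction_on with
  | zero => intro z hz; simp
  | succ k ih =>
      intro z hz
      have hmem : z + ((k : ℤ) : ℂ) ∈ s := by
        have h := hsm z hz (k : ℤ) 0
        simp only [Int.cast_zero, zero_mul, add_zero] at h; exact h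
      have h3 := h1 (z + ((k : ℤ) : ℂ)) hmem
      rw [show z + (((k : ℤ) + 1 : ℤ) : ℂ) = (z + ((k : ℤ) : ℂ)) + 1 by push_cast; ring, h3,
        ih z hz,
        zpow_add₀ (by norm_num : (-1 : ℂ) ≠ 0)]
      ring
  | pred k ih =>
      intro z hz
      have hmem : z + ((-k - 1 : ℤ) : ℂ) ∈ s := by
        have h := hsm z hz (-k - 1) 0
        simp only [Int.cast_zero, zero_mul, add_zero] at h; exact h
      have h3 := h1 _ hmem
      rw [show z + ((-k - 1 : ℤ) : ℂ) + 1 = z + ((-k : ℤ) : ℂ) by push_cast; ring] at h3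
      rw [ih z hz] at h3
      have h4 : f (z + ((-k - 1 : ℤ) : ℂ)) = -((-1 : ℂ) ^ (-(k : ℤ)) * f z) := by
        rw [h3]; ring
      rw [h4, show (-(k : ℤ) - 1 : ℤ) = -(k : ℤ) + (-1) by ring,
        zpow_add₀ (by norm_num : (-1 : ℂ) ≠ 0)]
      ring

lemma qp_tau (f : ℂ → ℂ) (s : Set ℂ)
    (hsm : ∀ z ∈ s, ∀ m n : ℤ, z + ((m : ℂ) + (n : ℂ) * τ) ∈ s)
    (h2 : ∀ z ∈ s, f (z + τ) = -cexp (-(π' * I * τ) - 2 * π' * I * z) * f z) (n : ℤ) :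
    ∀ z ∈ s, f (z + (n : ℂ) * τ) =
      (-1) ^ n * cexp (-(π' * I * (n : ℂ) ^ 2 * τ) - 2 * π' * I * (n : ℂ) * z) * f z := by
  induction n using Int.induction_on with
  | zero => intro z hz; simp
  | succ k ih =>
      intro z hz
      have hmem : z + ((k : ℤ) : ℂ) * τ ∈ s := by
        have h := hsm z hz 0 (k : ℤ)
        simp only [Int.cast_zero, zero_add] at h; exact h
      have h3 := h2 (z + ((k : ℤ) : ℂ) * τ) hmem
      rw [show z + (((k : ℤ) + 1 : ℤ) : ℂ) * τ = (z + ((k : ℤ) : ℂ) * τ) + τ by push_cast; ring,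
        h3, ih z hz]
      have hab : cexp (-(π' * I * τ) - 2 * π' * I * (z + ((k : ℤ) : ℂ) * τ)) *
          cexp (-(π' * I * ((k : ℤ) : ℂ) ^ 2 * τ) - 2 * π' * I * ((k : ℤ) : ℂ) * z) =
          cexp (-(π' * I * (((k : ℤ) + 1 : ℤ) : ℂ) ^ 2 * τ) -
            2 * π' * I * (((k : ℤ) + 1 : ℤ) : ℂ) * z) := by
        rw [← Complex.exp_add]; congr 1; push_cast; ring
      calc -cexp (-(π' * I * τ) - 2 * π' * I * (z + ((k : ℤ) : ℂ) * τ)) *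
          ((-1) ^ (k : ℤ) * cexp (-(π' * I * ((k : ℤ) : ℂ) ^ 2 * τ) -
            2 * π' * I * ((k : ℤ) : ℂ) * z) * f z)
          = -((-1) ^ (k : ℤ) *
            (cexp (-(π' * I * τ) - 2 * π' * I * (z + ((k : ℤ) : ℂ) * τ)) *
              cexp (-(π' * I * ((k : ℤ) : ℂ) ^ 2 * τ) -
                2 * π' * I * ((k : ℤ) : ℂ) * z)) * f z) := by ring
        _ = -((-1) ^ (k : ℤ) * cexp (-(π' * I * (((k : ℤ) + 1 : ℤ) : ℂ) ^ 2 * τ) -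
            2 * π' * I * (((k : ℤ) + 1 : ℤ) : ℂ) * z) * f z) := by rw [hab]
        _ = (-1) ^ ((k : ℤ) + 1) * cexp (-(π' * I * (((k : ℤ) + 1 : ℤ) : ℂ) ^ 2 * τ) -
            2 * π' * I * (((k : ℤ) + 1 : ℤ) : ℂ) * z) * f z := by
            rw [zpow_add₀ (by norm_num : (-1 : ℂ) ≠ 0)]; ring
  | pred k ih =>
      intro z hz
      have hmem : z + ((-k - 1 : ℤ) : ℂ) * τ ∈ s := by
        have h := hsm z hz 0 (-k - 1)
        simp only [Int.cast_zero, zero_add] at h; exact h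
      have h3 := h2 _ hmem
      rw [show z + ((-k - 1 : ℤ) : ℂ) * τ + τ = z + ((-k : ℤ) : ℂ) * τ by push_cast; ring,
        ih z hz] at h3
      have hne : (-cexp (-(π' * I * τ) - 2 * π' * I * (z + ((-k - 1 : ℤ) : ℂ) * τ))) ≠ 0 :=
        neg_ne_zero.mpr (Complex.exp_ne_zero _)
      apply mul_left_cancel₀ hne
      rw [← h3]
      have hab : cexp (-(π' * I * τ) - 2 * π' * I * (z + ((-k - 1 : ℤ) : ℂ) * τ)) *
          cexp (-(π' * I * ((-k - 1 : ℤ) : ℂ) ^ 2 * τ) - 2 * π' * I * ((-k - 1 : ℤ) : ℂ) * z) =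
          cexp (-(π' * I * ((-k : ℤ) : ℂ) ^ 2 * τ) - 2 * π' * I * ((-k : ℤ) : ℂ) * z) := by
        rw [← Complex.exp_add]; congr 1; push_cast; ring
      calc (-1 : ℂ) ^ (-(k : ℤ)) * cexp (-(π' * I * ((-k : ℤ) : ℂ) ^ 2 * τ) -
            2 * π' * I * ((-k : ℤ) : ℂ) * z) * f z
          = (-1) ^ (-(k : ℤ)) * (cexp (-(π' * I * τ) - 2 * π' * I * (z + ((-k - 1 : ℤ) : ℂ) * τ)) *
              cexp (-(π' * I * ((-k - 1 : ℤ) : ℂ) ^ 2 * τ) -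
                2 * π' * I * ((-k - 1 : ℤ) : ℂ) * z)) * f z := by rw [hab]
        _ = -cexp (-(π' * I * τ) - 2 * π' * I * (z + ((-k - 1 : ℤ) : ℂ) * τ)) *
            (-((-1) ^ (-(k : ℤ))) *
              cexp (-(π' * I * ((-k - 1 : ℤ) : ℂ) ^ 2 * τ) -
                2 * π' * I * ((-k - 1 : ℤ) : ℂ) * z) * f z) := by ring
        _ = -cexp (-(π' * I * τ) - 2 * π' * I * (z + ((-k - 1 : ℤ) : ℂ) * τ)) *
            ((-1) ^ (-(k : ℤ) - 1) *
              cexp (-(π' * I * ((-k - 1 : ℤ) : ℂ) ^ 2 * τ) -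
                2 * π' * I * ((-k - 1 : ℤ) : ℂ) * z) * f z) := by
            rw [show (-(k : ℤ) - 1 : ℤ) = -(k : ℤ) + (-1) by ring,
              zpow_add₀ (by norm_num : (-1 : ℂ) ≠ 0)]
            ring

lemma qp_transfer (f : ℂ → ℂ) (s : Set ℂ)
    (hsm : ∀ z ∈ s, ∀ m n : ℤ, z + ((m : ℂ) + (n : ℂ) * τ) ∈ s)
    (h1 : ∀ z ∈ s, f (z + 1) = -f z)
    (h2 : ∀ z ∈ s, f (z + τ) = -cexp (-(π' * I * τ) - 2 * π' * I * z) * f z)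
    (m n : ℤ) (z : ℂ) (hz : z ∈ s) :
    f (z + ((m : ℂ) + (n : ℂ) * τ)) = (-1) ^ (m + n) *
      cexp (-(π' * I * (n : ℂ) ^ 2 * τ) - 2 * π' * I * (n : ℂ) * z) * f z := by
  have hmem : z + (n : ℂ) * τ ∈ s := by
    have h := hsm z hz 0 n
    simp only [Int.cast_zero, zero_add] at h; exact h
  rw [show z + ((m : ℂ) + (n : ℂ) * τ) = (z + (n : ℂ) * τ) + (m : ℂ) by ring,
    qp_int f s hsm h1 m _ hmem, qp_tau f s hsm h2 n z hz,
    zpow_add₀ (by norm_num : (-1 : ℂ) ≠ 0)]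
  ring

end QP

/-- θ's lattice transfer (global) -/
lemma theta_transfer (hτ : 0 < τ.im) (m n : ℤ) (z : ℂ) :
    theta τ (z + ((m : ℂ) + (n : ℂ) * τ)) = (-1) ^ (m + n) *
      cexp (-(π' * I * (n : ℂ) ^ 2 * τ) - 2 * π' * I * (n : ℂ) * z) * theta τ z :=
  qp_transfer (theta τ) Set.univ (fun _ _ _ _ => Set.mem_univ _)
    (fun z _ => theta_add_one τ z) (fun z _ => theta_add_tau z) m n z (Set.mem_univ z)

lemma Pfun_transfer (hτ : 0 < τ.im) (m n : ℤ) {z : ℂ} (hz : z ∉ Lam τ) :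
    Pfun τ (z + ((m : ℂ) + (n : ℂ) * τ)) = (-1) ^ (m + n) *
      cexp (-(π' * I * (n : ℂ) ^ 2 * τ) - 2 * π' * I * (n : ℂ) * z) * Pfun τ z := by
  refine qp_transfer (Pfun τ) (Lam τ)ᶜ ?_ (fun z hz => Pfun_add_one z)
    (fun z hz => Pfun_shift hτ hz) m n z hz
  intro w hw m' n' hmem
  exact hw (by simpa using Lam.sub hmem (Lam.int_add m' n'))

lemma theta_vanish_lam (hτ : 0 < τ.im) {w : ℂ} (hw : w ∈ Lam τ) : theta τ w = 0 := by
  obtain ⟨m, n, rfl⟩ := hw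
  have := theta_transfer hτ m n 0
  rw [zero_add, theta_zero, mul_zero] at this
  exact this

open scoped Classical in
/-- the quotient θ/P, extended over the lattice -/
def Ffun (τ : ℂ) (z : ℂ) : ℂ :=
  if z ∈ Lam τ then deriv (theta τ) 0 / deriv (Pfun τ) 0 else theta τ z / Pfun τ z

lemma Ffun_off {z : ℂ} (hz : z ∉ Lam τ) : Ffun τ z = theta τ z / Pfun τ z := if_neg hz

lemma Ffun_on {z : ℂ} (hz : z ∈ Lam τ) :
    Ffun τ z = deriv (theta τ) 0 / deriv (Pfun τ) 0 := if_pos hz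

lemma Ffun_lattice (hτ : 0 < τ.im) (m n : ℤ) (z : ℂ) :
    Ffun τ (z + ((m : ℂ) + (n : ℂ) * τ)) = Ffun τ z := by
  by_cases hz : z ∈ Lam τ
  · rw [Ffun_on hz, Ffun_on (Lam.add hz (Lam.int_add m n))]
  · have hz2 : z + ((m : ℂ) + (n : ℂ) * τ) ∉ Lam τ := fun hmem =>
      hz (by simpa using Lam.sub hmem (Lam.int_add m n))
    rw [Ffun_off hz, Ffun_off hz2, theta_transfer hτ m n z, Pfun_transfer hτ m n hz,
      mul_div_mul_left _ _ ?hc]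
    case hc =>
      exact mul_ne_zero (zpow_ne_zero _ (by norm_num)) (Complex.exp_ne_zero _)

lemma Ffun_diff_off (hτ : 0 < τ.im) {z : ℂ} (hz : z ∉ Lam τ) :
    DifferentiableAt ℂ (Ffun τ) z := by
  obtain ⟨δ, hδ, hsep⟩ := Lam.sep hτ hz
  have hev : Ffun τ =ᶠ[𝓝 z] fun w => theta τ w / Pfun τ w := by
    filter_upwards [Metric.ball_mem_nhds z hδ] with w hw
    have hwnot : w ∉ Lam τ := fun hmem => absurd (hsep w hmem) (by
      have hd : dist z w < δ := by rw [dist_comm]; exact Metric.mem_ball.mp hw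
      exact not_le.mpr hd)
    exact Ffun_off hwnot
  exact (((theta_differentiable hτ) z).div ((Pfun_differentiable hτ) z)
    (Pfun_ne_zero hτ hz)).congr_of_eventuallyEq hev

lemma Ffun_eq_near (hτ : 0 < τ.im) {w : ℂ} (hw : w ∈ Lam τ) {z : ℂ}
    (hz : z ∈ Metric.ball w (min 1 τ.im)) :
    Ffun τ z = dslope (theta τ) 0 (z - w) / dslope (Pfun τ) 0 (z - w) := by
  rcases eq_or_ne z w with rfl | hne
  · rw [sub_self, dslope_same, dslope_same, Ffun_on hw]
  · have hu : z - w ≠ 0 := sub_ne_zero.mpr hne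
    have hsmall : ‖z - w‖ < min 1 τ.im := by
      rw [Metric.mem_ball, dist_eq_norm] at hz; exact hz
    have hzL : z ∉ Lam τ := by
      have := Lam.off_near hτ hw hu hsmall
      rwa [add_sub_cancel] at this
    have huL : (z - w) ∉ Lam τ := by
      intro hmem
      exact absurd (Lam.norm_lb hτ hmem hu) (not_le.mpr hsmall)
    obtain ⟨m, n, hmn⟩ := hw
    have hzw : z = (z - w) + ((m : ℂ) + (n : ℂ) * τ) := by rw [← hmn]; ring
    rw [Ffun_off hzL]
    rw [show theta τ z = theta τ ((z - w) + ((m : ℂ) + (n : ℂ) * τ)) by rw [← hzw],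
      show Pfun τ z = Pfun τ ((z - w) + ((m : ℂ) + (n : ℂ) * τ)) by rw [← hzw],
      theta_transfer hτ m n (z - w), Pfun_transfer hτ m n huL,
      mul_div_mul_left _ _ (mul_ne_zero (zpow_ne_zero _ (by norm_num))
        (Complex.exp_ne_zero _)),
      dslope_of_ne _ hu, dslope_of_ne _ hu, slope_def_field, slope_def_field,
      theta_zero, Pfun_zero, sub_zero, sub_zero, sub_zero]
    rw [div_div_div_cancel_right₀]
    exact hu

lemma Ffun_diff_lam (hτ : 0 < τ.im) {w : ℂ} (hw : w ∈ Lam τ) :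
    DifferentiableAt ℂ (Ffun τ) w := by
  have hδ₀ : (0 : ℝ) < min 1 τ.im := lt_min one_pos hτ
  have hball : Metric.ball w (min 1 τ.im) ∈ 𝓝 w := Metric.ball_mem_nhds w hδ₀
  have hG : ContinuousAt
      (fun z => dslope (theta τ) 0 (z - w) / dslope (Pfun τ) 0 (z - w)) w := by
    have hsub : ContinuousAt (fun z : ℂ => z - w) w := by fun_prop
    have hth : ContinuousAt (dslope (theta τ) 0) (w - w) := by
      rw [sub_self]; exact continuousAt_dslope_same.mpr ((theta_differentiable hτ) 0)
    have hPf : ContinuousAt (dslope (Pfun τ) 0) (w - w) := by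
      rw [sub_self]; exact continuousAt_dslope_same.mpr ((Pfun_differentiable hτ) 0)
    have hne : dslope (Pfun τ) 0 (w - w) ≠ 0 := by
      rw [sub_self, dslope_same]; exact deriv_Pfun_zero_ne hτ
    exact (ContinuousAt.comp (f := fun z : ℂ => z - w) hth hsub).div
      (ContinuousAt.comp (f := fun z : ℂ => z - w) hPf hsub) hne
  have hev : Ffun τ =ᶠ[𝓝 w]
      fun z => dslope (theta τ) 0 (z - w) / dslope (Pfun τ) 0 (z - w) := by
    filter_upwards [hball] with z hz
    exact Ffun_eq_near hτ hw hz
  have hcont : ContinuousAt (Ffun τ) w := hG.congr hev.symm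
  have hdo : DifferentiableOn ℂ (Ffun τ) (Metric.ball w (min 1 τ.im) \ {w}) := by
    intro z hz
    obtain ⟨hzb, hzw⟩ := hz
    have hu : z - w ≠ 0 := sub_ne_zero.mpr hzw
    have hsmall : ‖z - w‖ < min 1 τ.im := by
      rw [Metric.mem_ball, dist_eq_norm] at hzb; exact hzb
    have hzL : z ∉ Lam τ := by
      have := Lam.off_near hτ hw hu hsmall
      rwa [add_sub_cancel] at this
    exact (Ffun_diff_off hτ hzL).differentiableWithinAt
  have hdOn := (Complex.differentiableOn_compl_singleton_and_continuousAt_iff hball).mp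
    ⟨hdo, hcont⟩
  exact hdOn.differentiableAt hball

lemma Ffun_differentiable (hτ : 0 < τ.im) : Differentiable ℂ (Ffun τ) := by
  intro z
  by_cases hz : z ∈ Lam τ
  · exact Ffun_diff_lam hτ hz
  · exact Ffun_diff_off hτ hz

lemma Ffun_bounded (hτ : 0 < τ.im) : Bornology.IsBounded (Set.range (Ffun τ)) := by
  have hcomp : IsCompact (Ffun τ '' Metric.closedBall 0 (1 + ‖τ‖)) :=
    (isCompact_closedBall 0 (1 + ‖τ‖)).image (Ffun_differentiable hτ).continuous
  apply hcomp.isBounded.subset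
  rintro _ ⟨z, rfl⟩
  obtain ⟨m, n, hmn⟩ := Lam.reduce hτ z
  refine ⟨z - ((m : ℂ) + (n : ℂ) * τ), ?_, ?_⟩
  · rw [Metric.mem_closedBall, dist_zero_right]; exact hmn
  · rw [← Ffun_lattice hτ m n (z - ((m : ℂ) + (n : ℂ) * τ))]
    congr 1
    ring

lemma Ffun_const (hτ : 0 < τ.im) (z : ℂ) : Ffun τ z = Ffun τ 0 :=
  (Ffun_differentiable hτ).apply_eq_apply_of_bounded (Ffun_bounded hτ) z 0

/-- θ is not identically zero: Fourier/integral argument. -/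
lemma exists_theta_ne (hτ : 0 < τ.im) : ∃ z : ℂ, theta τ z ≠ 0 := by
  by_contra hcon
  push_neg at hcon
  have hJ : ∀ w : ℂ, jacobiTheta₂ w τ = 0 := by
    intro w
    have h := hcon (w - 1 / 2 - τ / 2)
    rw [theta_eq, neg_eq_zero,
      show w - 1 / 2 - τ / 2 + 1 / 2 + τ / 2 = w by ring] at h
    rcases mul_eq_zero.mp h with h | h
    · exact absurd h (Complex.exp_ne_zero _)
    · exact h
  -- each term's norm on the unit interval
  have hnorm : ∀ (n : ℤ) (x : ℝ),
      ‖jacobiTheta₂_term n (x : ℂ) τ‖ = Real.exp (-Real.pi * (n : ℝ) ^ 2 * τ.im) := by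
    intro n x
    rw [jacobiTheta₂_term, Complex.norm_exp]
    congr 1
    simp [pow_two, Complex.add_re, Complex.mul_re, Complex.mul_im]
  have hsummable : Summable (fun n : ℤ => Real.exp (-Real.pi * (n : ℝ) ^ 2 * τ.im)) := by
    have hgeom : Summable (fun k : ℕ => Real.exp (-Real.pi * τ.im) ^ k) :=
      summable_geometric_of_lt_one (Real.exp_pos _).le
        (Real.exp_lt_one_iff.mpr (by nlinarith [mul_pos Real.pi_pos hτ]))
    have hbound : ∀ k : ℕ, Real.exp (-Real.pi * (k : ℝ) ^ 2 * τ.im) ≤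
        Real.exp (-Real.pi * τ.im) ^ k := by
      intro k
      rw [← Real.exp_nat_mul]
      apply Real.exp_le_exp.mpr
      have hk : (0 : ℝ) ≤ (k : ℝ) ^ 2 - (k : ℝ) := by
        rcases Nat.eq_zero_or_pos k with rfl | hk
        · simp
        · have h1 : (1 : ℝ) ≤ (k : ℝ) := by exact_mod_cast hk
          nlinarith
      nlinarith [mul_nonneg (mul_nonneg Real.pi_pos.le hk) hτ.le]
    apply Summable.of_nat_of_neg
    · exact Summable.of_nonneg_of_le (fun k => (Real.exp_pos _).le) (fun k => by
        push_cast; exact hbound k) hgeom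
    · exact Summable.of_nonneg_of_le (fun k => (Real.exp_pos _).le) (fun k => by
        push_cast
        rw [show (-(k : ℝ)) ^ 2 = (k : ℝ) ^ 2 by ring]
        exact hbound k) hgeom
  -- swap integral and sum
  have hmeas : ∀ n : ℤ, MeasureTheory.AEStronglyMeasurable
      (fun x : ℝ => jacobiTheta₂_term n (x : ℂ) τ)
      (MeasureTheory.volume.restrict (Set.Ioc (0 : ℝ) 1)) := by
    intro n
    apply Continuous.aestronglyMeasurable
    unfold jacobiTheta₂_term
    fun_prop
  have hlint : ∑' n : ℤ, ∫⁻ x in Set.Ioc (0 : ℝ) 1,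
      ‖jacobiTheta₂_term n (x : ℂ) τ‖₊ ∂MeasureTheory.volume ≠ ⊤ := by
    have heq : ∀ n : ℤ, ∫⁻ x in Set.Ioc (0 : ℝ) 1,
        ‖jacobiTheta₂_term n (x : ℂ) τ‖₊ ∂MeasureTheory.volume =
        ENNReal.ofReal (Real.exp (-Real.pi * (n : ℝ) ^ 2 * τ.im)) := by
      intro n
      have hfun : (fun x : ℝ => (‖jacobiTheta₂_term n (x : ℂ) τ‖₊ : ENNReal)) =
          fun _ : ℝ => ENNReal.ofReal (Real.exp (-Real.pi * (n : ℝ) ^ 2 * τ.im)) := by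
        funext x
        rw [← enorm_eq_nnnorm, ← ofReal_norm, hnorm n x]
      rw [hfun, MeasureTheory.setLIntegral_const, Real.volume_Ioc]
      norm_num
    rw [funext heq]
    rw [← ENNReal.ofReal_tsum_of_nonneg (fun n => (Real.exp_pos _).le) hsummable]
    exact ENNReal.ofReal_ne_top
  have hswap := MeasureTheory.integral_tsum hmeas hlint
  -- the integral of each term
  have hterm0 : ∫ x in Set.Ioc (0 : ℝ) 1, jacobiTheta₂_term 0 (x : ℂ) τ
      ∂MeasureTheory.volume = 1 := by
    have : ∀ x : ℝ, jacobiTheta₂_term 0 (x : ℂ) τ = 1 := by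
      intro x
      rw [jacobiTheta₂_term]
      norm_num
    rw [funext this, MeasureTheory.setIntegral_const, Real.volume_real_Ioc]
    norm_num
  have htermn : ∀ n : ℤ, n ≠ 0 → ∫ x in Set.Ioc (0 : ℝ) 1,
      jacobiTheta₂_term n (x : ℂ) τ ∂MeasureTheory.volume = 0 := by
    intro n hn
    have hc : (2 * π' * I * (n : ℂ)) ≠ 0 :=
      mul_ne_zero (mul_ne_zero (mul_ne_zero two_ne_zero
        (Complex.ofReal_ne_zero.mpr Real.pi_ne_zero)) Complex.I_ne_zero)
        (Int.cast_ne_zero.mpr hn)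
    have hsplit : ∀ x : ℝ, jacobiTheta₂_term n (x : ℂ) τ =
        cexp (π' * I * (n : ℂ) ^ 2 * τ) * cexp ((2 * π' * I * (n : ℂ)) * (x : ℂ)) := by
      intro x
      rw [jacobiTheta₂_term, ← Complex.exp_add]
      congr 1
      ring
    rw [funext hsplit, MeasureTheory.integral_const_mul]
    have hI : ∫ x in Set.Ioc (0 : ℝ) 1, cexp ((2 * π' * I * (n : ℂ)) * (x : ℂ))
        ∂MeasureTheory.volume = 0 := by
      rw [← intervalIntegral.integral_of_le (zero_le_one)]
      rw [integral_exp_mul_complex hc]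
      have h1 : cexp (2 * π' * I * (n : ℂ) * (1 : ℝ)) = 1 := by
        rw [show (2 * π' * I * (n : ℂ) * ((1 : ℝ) : ℂ)) = (n : ℂ) * (2 * π' * I) by
          push_cast; ring]
        exact Complex.exp_int_mul_two_pi_mul_I n
      have h0 : cexp (2 * π' * I * (n : ℂ) * ((0 : ℝ) : ℂ)) = 1 := by
        norm_num
      rw [h1, h0]
      simp
    rw [hI, mul_zero]
  -- conclude
  have hzero : ∫ x in Set.Ioc (0 : ℝ) 1, jacobiTheta₂ (x : ℂ) τ ∂MeasureTheory.volume = 0 := by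
    have : ∀ x : ℝ, jacobiTheta₂ (x : ℂ) τ = 0 := fun x => hJ _
    rw [funext this]
    simp
  have hone : ∫ x in Set.Ioc (0 : ℝ) 1, jacobiTheta₂ (x : ℂ) τ ∂MeasureTheory.volume = 1 := by
    have hJdef : (fun x : ℝ => jacobiTheta₂ (x : ℂ) τ) =
        fun x : ℝ => ∑' n : ℤ, jacobiTheta₂_term n (x : ℂ) τ := rfl
    rw [hJdef, hswap, tsum_eq_single (0 : ℤ) (fun n hn => htermn n hn), hterm0]
  rw [hzero] at hone
  exact absurd hone (by norm_num)

/-- MAIN RESULT 1: θ does not vanish off the lattice. -/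
lemma theta_ne_zero (hτ : 0 < τ.im) {a : ℂ} (ha : a ∉ Lam τ) : theta τ a ≠ 0 := by
  obtain ⟨z₁, hz₁⟩ := exists_theta_ne hτ
  have hz₁L : z₁ ∉ Lam τ := fun h => hz₁ (theta_vanish_lam hτ h)
  have hc : Ffun τ 0 ≠ 0 := by
    rw [← Ffun_const hτ z₁, Ffun_off hz₁L]
    exact div_ne_zero hz₁ (Pfun_ne_zero hτ hz₁L)
  have ha2 := Ffun_const hτ a
  rw [Ffun_off ha] at ha2
  intro h0
  rw [h0, zero_div] at ha2
  exact hc ha2.symm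

/-- MAIN RESULT 2: θ'(0) ≠ 0. -/
lemma deriv_theta_zero_ne (hτ : 0 < τ.im) : deriv (theta τ) 0 ≠ 0 := by
  obtain ⟨z₁, hz₁⟩ := exists_theta_ne hτ
  have hz₁L : z₁ ∉ Lam τ := fun h => hz₁ (theta_vanish_lam hτ h)
  have hc : Ffun τ 0 ≠ 0 := by
    rw [← Ffun_const hτ z₁, Ffun_off hz₁L]
    exact div_ne_zero hz₁ (Pfun_ne_zero hτ hz₁L)
  rw [Ffun_on Lam.zero] at hc
  intro h0
  rw [h0, zero_div] at hc
  exact hc rfl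

-- the rescaled theta ratio r = dslope θ 0
lemma r_zero (τ : ℂ) : dslope (theta τ) 0 0 = deriv (theta τ) 0 := dslope_same _ _

lemma r_apply {w : ℂ} (hw : w ≠ 0) : dslope (theta τ) 0 w = theta τ w / w := by
  rw [dslope_of_ne _ hw, slope_def_field, theta_zero, sub_zero, sub_zero]

lemma r_diff (hτ : 0 < τ.im) : DifferentiableAt ℂ (dslope (theta τ) 0) 0 := by
  obtain ⟨p, hp⟩ := (theta_differentiable hτ).analyticAt 0
  exact hp.has_fpower_series_dslope_fslope.differentiableAt

lemma r_even (τ : ℂ) (w : ℂ) : dslope (theta τ) 0 (-w) = dslope (theta τ) 0 w := by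
  rcases eq_or_ne w 0 with rfl | hw
  · rw [neg_zero]
  · rw [r_apply hw, r_apply (neg_ne_zero.mpr hw), theta_neg, neg_div_neg_eq]

lemma r_deriv_zero (hτ : 0 < τ.im) : deriv (dslope (theta τ) 0) 0 = 0 := by
  have hD := (r_diff hτ).hasDerivAt
  have hneg : HasDerivAt (fun w : ℂ => dslope (theta τ) 0 (-w))
      (-deriv (dslope (theta τ) 0) 0) 0 := by
    have h1 : HasDerivAt (fun w : ℂ => -w) (-1 : ℂ) 0 := by
      have := (hasDerivAt_id (0 : ℂ)).neg; exact this
    have h2 : HasDerivAt (dslope (theta τ) 0) (deriv (dslope (theta τ) 0) 0) (-0 : ℂ) := by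
      rw [neg_zero]; exact hD
    have := h2.comp 0 h1
    simp at this; exact this
  have heq : (fun w : ℂ => dslope (theta τ) 0 (-w)) = dslope (theta τ) 0 :=
    funext fun w => r_even τ w
  rw [heq] at hneg
  have := hD.unique hneg
  linear_combination this / 2

section Main

variable {N : ℕ} (hτ : 0 < τ.im)

theorem main_thm {N : ℕ} (τ ν : ℂ) (hτ : 0 < τ.im) (hν : ν ≠ 0)
    (p q : Fin N → ℂ) (z : ℂ) (hz : z ∉ Lam τ)
    (hq : ∀ i j : Fin N, i ≠ j → q i - q j ∉ Lam τ) (i j : Fin N) :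
    Filter.Tendsto
      (fun ε : ℂ =>
        ν * (phi τ z (q i - q j + ε * ν) *
          (Complex.exp (ε * p j) *
            ∏ k ∈ Finset.univ.filter (fun k => k ≠ j),
              theta τ (q j - q k - ε * ν) / theta τ (q j - q k))) -
        (if i = j then (1 : ℂ) else 0) / ε)
      (𝓝[≠] (0 : ℂ))
      (𝓝 ((if i = j then (1 : ℂ) else 0) *
            ((p i - ν * ∑ k ∈ Finset.univ.filter (fun k => k ≠ i), E1 τ (q i - q k)) +
              ν * E1 τ z) +
          (1 - (if i = j then (1 : ℂ) else 0)) * (ν * phi τ z (q i - q j)))) := by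
  have hθc : Continuous (theta τ) := (theta_differentiable hτ).continuous
  have hθz : theta τ z ≠ 0 := theta_ne_zero hτ hz
  have hθ'0 : deriv (theta τ) 0 ≠ 0 := deriv_theta_zero_ne hτ
  by_cases hij : i = j
  · -- diagonal case
    subst hij
    simp only [eq_self_iff_true, if_true, sub_self, zero_add, one_mul, zero_mul, add_zero]
    set s : Finset (Fin N) := Finset.univ.filter (fun k => k ≠ i) with hs
    have hθk : ∀ k ∈ s, theta τ (q i - q k) ≠ 0 := by
      intro k hk
      have hki : k ≠ i := (Finset.mem_filter.mp hk).2
      exact theta_ne_zero hτ (hq i k (Ne.symm hki))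
    -- the functions A and B
    set A : ℂ → ℂ := fun ε => deriv (theta τ) 0 / theta τ z *
      (theta τ (z + ε * ν) * (dslope (theta τ) 0 (ε * ν))⁻¹) with hAdef
    set B : ℂ → ℂ := fun ε => cexp (ε * p i) *
      ∏ k ∈ s, theta τ (q i - q k - ε * ν) / theta τ (q i - q k) with hBdef
    have hA0 : A 0 = 1 := by
      rw [hAdef]
      simp only [zero_mul, add_zero]
      rw [r_zero]
      field_simp
    have hB0 : B 0 = 1 := by
      rw [hBdef]
      simp only [zero_mul, sub_zero, Complex.exp_zero, one_mul]
      rw [Finset.prod_congr rfl (fun k hk => div_self (hθk k hk)), Finset.prod_const_one]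
    have hinner : HasDerivAt (fun ε : ℂ => ε * ν) ν 0 := by
      simpa using (hasDerivAt_id (0 : ℂ)).mul_const ν
    -- derivative of A
    have hθA : HasDerivAt (fun ε : ℂ => theta τ (z + ε * ν)) (deriv (theta τ) z * ν) 0 := by
      have houter : HasDerivAt (theta τ) (deriv (theta τ) z) (z + 0 * ν) := by
        rw [zero_mul, add_zero]
        exact ((theta_differentiable hτ) z).hasDerivAt
      exact houter.comp 0 (h := fun ε : ℂ => z + ε * ν) (hinner.const_add z)
    have hrA : HasDerivAt (fun ε : ℂ => dslope (theta τ) 0 (ε * ν)) 0 0 := by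
      have houter : HasDerivAt (dslope (theta τ) 0) (deriv (dslope (theta τ) 0) 0)
          ((0 : ℂ) * ν) := by
        rw [zero_mul]
        exact (r_diff hτ).hasDerivAt
      have := houter.comp 0 hinner
      rwa [r_deriv_zero hτ, zero_mul] at this
    have hr0ν : dslope (theta τ) 0 ((0 : ℂ) * ν) ≠ 0 := by
      rw [zero_mul, r_zero]
      exact hθ'0
    have hrinv : HasDerivAt (fun ε : ℂ => (dslope (theta τ) 0 (ε * ν))⁻¹) 0 0 := by
      have := hrA.inv hr0ν
      simp at this; exact this
    have hA : HasDerivAt A (ν * E1 τ z) 0 := by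
      have h1 := hθA.mul hrinv
      have h2 := h1.const_mul (deriv (theta τ) 0 / theta τ z)
      have h3 : deriv (theta τ) 0 / theta τ z *
          (deriv (theta τ) z * ν * (dslope (theta τ) 0 ((0 : ℂ) * ν))⁻¹ +
            theta τ (z + 0 * ν) * 0) = ν * E1 τ z := by
        rw [zero_mul, r_zero, mul_zero, add_zero, E1]
        field_simp
      rw [hAdef]
      exact h3 ▸ h2
    -- derivative of B
    have hBk : ∀ k ∈ s, HasDerivAt
        (fun ε : ℂ => theta τ (q i - q k - ε * ν) / theta τ (q i - q k))
        (-(ν * E1 τ (q i - q k))) 0 := by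
      intro k hk
      have houter : HasDerivAt (theta τ) (deriv (theta τ) (q i - q k)) (q i - q k - 0 * ν) := by
        rw [zero_mul, sub_zero]
        exact ((theta_differentiable hτ) _).hasDerivAt
      have hin : HasDerivAt (fun ε : ℂ => q i - q k - ε * ν) (-ν) 0 := hinner.const_sub _
      have h1 := (houter.comp 0 hin).div_const (theta τ (q i - q k))
      have h2 : deriv (theta τ) (q i - q k) * -ν / theta τ (q i - q k) =
          -(ν * E1 τ (q i - q k)) := by
        rw [E1]; ring
      exact h2 ▸ h1
    have hprod : HasDerivAt (fun ε : ℂ => ∏ k ∈ s,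
        theta τ (q i - q k - ε * ν) / theta τ (q i - q k))
        (-(ν * ∑ k ∈ s, E1 τ (q i - q k))) 0 := by
      have h1 := HasDerivAt.fun_finsetProd (u := s) (fun k hk => hBk k hk)
      have h2 : ∑ k ∈ s, (∏ l ∈ s.erase k,
            theta τ (q i - q l - 0 * ν) / theta τ (q i - q l)) • (-(ν * E1 τ (q i - q k)))
          = -(ν * ∑ k ∈ s, E1 τ (q i - q k)) := by
        rw [Finset.mul_sum, ← Finset.sum_neg_distrib]
        apply Finset.sum_congr rfl
        intro k hk
        rw [Finset.prod_congr rfl (fun l hl =>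
            show theta τ (q i - q l - 0 * ν) / theta τ (q i - q l) = 1 by
              rw [zero_mul, sub_zero]
              exact div_self (hθk l (Finset.mem_of_mem_erase hl))),
          Finset.prod_const_one, one_smul]
      exact h2 ▸ h1
    have hexp : HasDerivAt (fun ε : ℂ => cexp (ε * p i)) (p i) 0 := by
      have houter : HasDerivAt cexp (cexp ((0 : ℂ) * p i)) ((0 : ℂ) * p i) :=
        Complex.hasDerivAt_exp _
      have := houter.comp 0 ((hasDerivAt_id (0 : ℂ)).mul_const (p i))
      simp at this; exact this
    have hB : HasDerivAt B (p i - ν * ∑ k ∈ s, E1 τ (q i - q k)) 0 := by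
      have h1 := hexp.mul hprod
      have h2 : p i * ∏ k ∈ s, theta τ (q i - q k - 0 * ν) / theta τ (q i - q k) +
          cexp (0 * p i) * -(ν * ∑ k ∈ s, E1 τ (q i - q k)) =
          p i - ν * ∑ k ∈ s, E1 τ (q i - q k) := by
        rw [Finset.prod_congr rfl (fun k hk =>
            show theta τ (q i - q k - 0 * ν) / theta τ (q i - q k) = 1 by
              rw [zero_mul, sub_zero]
              exact div_self (hθk k hk)), Finset.prod_const_one, zero_mul, Complex.exp_zero]
        ring
      rw [hBdef]
      exact h2 ▸ h1
    have hH : HasDerivAt (fun ε => A ε * B ε)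
        ((p i - ν * ∑ k ∈ s, E1 τ (q i - q k)) + ν * E1 τ z) 0 := by
      have h1 := hA.mul hB
      rw [hA0, hB0] at h1
      have h2 : ν * E1 τ z * 1 + 1 * (p i - ν * ∑ k ∈ s, E1 τ (q i - q k)) =
          (p i - ν * ∑ k ∈ s, E1 τ (q i - q k)) + ν * E1 τ z := by ring
      exact h2 ▸ h1
    have htend := hasDerivAt_iff_tendsto_slope.mp hH
    -- eventual equality of our function with the slope
    have hev : (fun ε : ℂ => ν * (phi τ z (ε * ν) * B ε) - 1 / ε)
        =ᶠ[𝓝[≠] (0 : ℂ)] slope (fun ε => A ε * B ε) 0 := by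
      have hδ : (0 : ℝ) < min 1 τ.im / (‖ν‖ + 1) := by
        apply div_pos (lt_min one_pos hτ)
        positivity
      filter_upwards [self_mem_nhdsWithin,
        nhdsWithin_le_nhds (Metric.ball_mem_nhds (0 : ℂ) hδ)] with ε hεne hεball
      have hε0 : ε ≠ 0 := hεne
      have hεν : ε * ν ≠ 0 := mul_ne_zero hε0 hν
      have hsmall : ‖ε * ν‖ < min 1 τ.im := by
        rw [Metric.mem_ball, dist_zero_right] at hεball
        rw [norm_mul]
        calc ‖ε‖ * ‖ν‖ ≤ ‖ε‖ * (‖ν‖ + 1) := by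
              apply mul_le_mul_of_nonneg_left (by linarith) (norm_nonneg ε)
          _ < min 1 τ.im / (‖ν‖ + 1) * (‖ν‖ + 1) := by
              apply mul_lt_mul_of_pos_right hεball (by positivity)
          _ = min 1 τ.im := by field_simp
      have hεL : ε * ν ∉ Lam τ := fun hmem =>
        absurd (Lam.norm_lb hτ hmem hεν) (not_le.mpr hsmall)
      have hθεν : theta τ (ε * ν) ≠ 0 := theta_ne_zero hτ hεL
      rw [slope_def_field, hA0, hB0, one_mul, sub_zero]
      simp only [hAdef, phi]
      rw [r_apply hεν]
      field_simp
    exact htend.congr' hev.symm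
  · -- off-diagonal case
    simp only [if_neg hij, zero_div, sub_zero, zero_mul, zero_add, sub_zero, one_mul]
    have hnum : Continuous (fun ε : ℂ => deriv (theta τ) 0 *
        theta τ (z + (q i - q j + ε * ν))) :=
      continuous_const.mul (hθc.comp (by fun_prop))
    have hden : Continuous (fun ε : ℂ => theta τ z * theta τ (q i - q j + ε * ν)) :=
      continuous_const.mul (hθc.comp (by fun_prop))
    have hden0 : theta τ z * theta τ (q i - q j + 0 * ν) ≠ 0 := by
      rw [zero_mul, add_zero]
      exact mul_ne_zero hθz (theta_ne_zero hτ (hq i j hij))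
    have hphi : ContinuousAt (fun ε : ℂ => phi τ z (q i - q j + ε * ν)) 0 := by
      simp only [phi]
      exact ContinuousAt.div hnum.continuousAt hden.continuousAt hden0
    have hrest : Continuous (fun ε : ℂ => cexp (ε * p j) *
        ∏ k ∈ Finset.univ.filter (fun k => k ≠ j),
          theta τ (q j - q k - ε * ν) / theta τ (q j - q k)) := by
      apply Continuous.mul (Complex.continuous_exp.comp (by fun_prop))
      apply continuous_finset_prod
      intro k _
      exact (hθc.comp (by fun_prop)).div_const _
    have hfull : ContinuousAt (fun ε : ℂ => ν * (phi τ z (q i - q j + ε * ν) *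
        (cexp (ε * p j) * ∏ k ∈ Finset.univ.filter (fun k => k ≠ j),
          theta τ (q j - q k - ε * ν) / theta τ (q j - q k)))) 0 :=
      continuousAt_const.mul (hphi.mul hrest.continuousAt)
    have hval : ν * (phi τ z (q i - q j + 0 * ν) *
        (cexp (0 * p j) * ∏ k ∈ Finset.univ.filter (fun k => k ≠ j),
          theta τ (q j - q k - 0 * ν) / theta τ (q j - q k))) =
        ν * phi τ z (q i - q j) := by
      rw [Finset.prod_congr rfl (fun k hk =>
          show theta τ (q j - q k - 0 * ν) / theta τ (q j - q k) = 1 by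
            rw [zero_mul, sub_zero]
            exact div_self (theta_ne_zero hτ
              (hq j k (Ne.symm (Finset.mem_filter.mp hk).2))))]
      rw [Finset.prod_const_one, zero_mul, add_zero, zero_mul, Complex.exp_zero]
      ring
    have := hfull.tendsto
    rw [hval] at this
    exact this.mono_left nhdsWithin_le_nhds

end Main

end RS

/-- non-relativistic limit of the Ruijsenaars–Schneider Lax matrix.
With η = εν and c = 1/ε, for all i, j,
lim_{ε→0} (ν·L_{ij}(z) − δ_{ij}/ε) = L^CM_{ij}(z), the elliptic Calogero–Moser Lax
matrix with shifted momenta p̃_i = p_i − ν·∑_{k≠i} E₁(q_i−q_k). -/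
theorem rs_nonrelativistic_limit_lax {N : ℕ} (τ ν : ℂ) (hτ : 0 < τ.im) (hν : ν ≠ 0)
    (p q : Fin N → ℂ) (z : ℂ) (hz : z ∉ Lam τ)
    (hq : ∀ i j : Fin N, i ≠ j → q i - q j ∉ Lam τ) (i j : Fin N) :
    Filter.Tendsto
      (fun ε : ℂ =>
        ν * (phi τ z (q i - q j + ε * ν) *
          (Complex.exp (ε * p j) *
            ∏ k ∈ Finset.univ.filter (fun k => k ≠ j),
              theta τ (q j - q k - ε * ν) / theta τ (q j - q k))) -
        (if i = j then (1 : ℂ) else 0) / ε)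
      (𝓝[≠] (0 : ℂ))
      (𝓝 ((if i = j then (1 : ℂ) else 0) *
            ((p i - ν * ∑ k ∈ Finset.univ.filter (fun k => k ≠ i), E1 τ (q i - q k)) +
              ν * E1 τ z) +
          (1 - (if i = j then (1 : ℂ) else 0)) * (ν * phi τ z (q i - q j)))) :=
  RS.main_thm τ ν hτ hν p q z hz hq i j

end
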